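/- Let K be a field and G a subgroup of the multiplicative group K^×. Then any two valuation subrings of K that are coarsely compatible with G are comparable: if O₁ and O₂ are both coarsely compatible with G, then O₁ ⊆ O₂ or O₂ ⊆ O₁. -/

import Mathlib

section Aux

variable {K : Type*} [Field K]

/-- The compositum of two valuation subrings: the smallest valuation subring containing both
(when neither contains the other). Concretely, elements `x` such that `x * s ∈ O` for some
unit `s` of `O'` lying in `O`. -/
def ValuationSubring.comp (O O' : ValuationSubring K) : ValuationSubring K where
  carrier := {x : K | ∃ s : K, O'.valuation s = 1 ∧ O.valuation s ≤ 1 ∧ O.valuation (x * s) ≤ 1}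
  one_mem' := ⟨1, map_one _, (map_one _).le, by simpa using (map_one O.valuation).le⟩
  zero_mem' := ⟨1, map_one _, (map_one _).le, by simp⟩
  mul_mem' := by
    rintro x y ⟨s, hs1, hs2, hs3⟩ ⟨t, ht1, ht2, ht3⟩
    refine ⟨s * t, by rw [map_mul, hs1, ht1, one_mul], by
      rw [map_mul]; exact mul_le_one' hs2 ht2, ?_⟩
    rw [show x * y * (s * t) = (x * s) * (y * t) by ring, map_mul]
    exact mul_le_one' hs3 ht3
  add_mem' := by
    rintro x y ⟨s, hs1, hs2, hs3⟩ ⟨t, ht1, ht2, ht3⟩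
    refine ⟨s * t, by rw [map_mul, hs1, ht1, one_mul], by
      rw [map_mul]; exact mul_le_one' hs2 ht2, ?_⟩
    rw [show (x + y) * (s * t) = (x * s) * t + (y * t) * s by ring]
    refine le_trans (Valuation.map_add _ _ _) (max_le ?_ ?_)
    · rw [map_mul]; exact mul_le_one' hs3 ht2
    · rw [map_mul]; exact mul_le_one' ht3 hs2
  neg_mem' := by
    rintro x ⟨s, hs1, hs2, hs3⟩
    exact ⟨s, hs1, hs2, by rwa [neg_mul, Valuation.map_neg]⟩
  mem_or_inv_mem' := by
    intro x
    by_cases h : O.valuation x ≤ 1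
    · exact Or.inl ⟨1, map_one _, (map_one _).le, by rwa [mul_one]⟩
    · refine Or.inr ⟨1, map_one _, (map_one _).le, ?_⟩
      rw [mul_one, map_inv₀]
      exact inv_le_one_of_one_le₀ (le_of_lt (not_le.mp h))

namespace ValuationSubring

theorem mem_comp_iff {O O' : ValuationSubring K} {x : K} :
    x ∈ O.comp O' ↔ ∃ s : K, O'.valuation s = 1 ∧ O.valuation s ≤ 1 ∧
      O.valuation (x * s) ≤ 1 := Iff.rfl

theorem le_comp (O O' : ValuationSubring K) : O ≤ O.comp O' := by
  intro x hx
  exact ⟨1, map_one _, (map_one _).le, by rwa [mul_one, O.valuation_le_one_iff]⟩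

theorem exists_unit_small {O O' : ValuationSubring K} (h : ¬ O' ≤ O) :
    ∃ s : K, O'.valuation s = 1 ∧ O.valuation s < 1 := by
  obtain ⟨b, hb1, hb2⟩ := SetLike.not_le_iff_exists.mp h
  have hb2' : 1 < O.valuation b := not_le.mp (fun hc => hb2 ((O.valuation_le_one_iff b).mp hc))
  have hbne : O.valuation b ≠ 0 := fun hc => by simp [hc] at hb2'
  rcases lt_or_eq_of_le ((O'.valuation_le_one_iff b).mpr hb1) with hlt | heq
  · refine ⟨(1 + b)⁻¹, ?_, ?_⟩
    · rw [map_inv₀, Valuation.map_add_eq_of_lt_left _ (by simpa using hlt), map_one, inv_one]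
    · rw [map_inv₀, Valuation.map_add_eq_of_lt_right _ (by simpa using hb2')]
      exact inv_lt_one_of_one_lt₀ hb2'
  · refine ⟨b⁻¹, by rw [map_inv₀, heq, inv_one], ?_⟩
    rw [map_inv₀]
    exact inv_lt_one_of_one_lt₀ hb2'

theorem le_comp' {O O' : ValuationSubring K} (h : ¬ O' ≤ O) : O' ≤ O.comp O' := by
  intro x hx
  by_cases hxO : x ∈ O
  · exact le_comp O O' hxO
  have hx1 : 1 < O.valuation x := not_le.mp (fun hc => hxO ((O.valuation_le_one_iff x).mp hc))
  have hxne : x ≠ 0 := by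
    rintro rfl; simp at hx1
  have hvne : O.valuation x ≠ 0 := O.valuation.ne_zero_iff.mpr hxne
  rcases lt_or_eq_of_le ((O'.valuation_le_one_iff x).mpr hx) with hlt | heq
  · refine ⟨(1 + x)⁻¹, ?_, ?_, ?_⟩
    · rw [map_inv₀, Valuation.map_add_eq_of_lt_left _ (by simpa using hlt), map_one, inv_one]
    · rw [map_inv₀, Valuation.map_add_eq_of_lt_right _ (by simpa using hx1)]
      exact le_of_lt (inv_lt_one_of_one_lt₀ hx1)
    · rw [map_mul, map_inv₀, Valuation.map_add_eq_of_lt_right _ (by simpa using hx1),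
        mul_inv_cancel₀ hvne]
  · refine ⟨x⁻¹, by rw [map_inv₀, heq, inv_one], ?_, ?_⟩
    · rw [map_inv₀]
      exact le_of_lt (inv_lt_one_of_one_lt₀ hx1)
    · rw [mul_inv_cancel₀ hxne, map_one]

theorem comp_le_comp {O O' : ValuationSubring K} (h : ¬ O ≤ O') :
    O.comp O' ≤ O'.comp O := by
  rintro x ⟨s, hs1, hs2, hs3⟩
  have hsne : s ≠ 0 := by
    rintro rfl; simp at hs1
  have h1 : x * s ∈ O'.comp O := le_comp' h ((O.valuation_le_one_iff _).mp hs3)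
  have h2 : s⁻¹ ∈ O'.comp O :=
    le_comp O' O ((O'.valuation_le_one_iff _).mp (by rw [map_inv₀, hs1, inv_one]))
  have hmul : x * s * s⁻¹ ∈ O'.comp O := Subring.mul_mem _ h1 h2
  rwa [mul_assoc, mul_inv_cancel₀ hsne, mul_one] at hmul

end ValuationSubring

end Aux

/-- `O` is weakly compatible with the multiplicative subgroup `G ≤ Kˣ` if there is an ideal
`A` of `O` with radical the maximal ideal and `1 + A ⊆ G`. -/
def WeaklyCompatible {K : Type*} [Field K] (O : ValuationSubring K) (G : Subgroup Kˣ) : Prop :=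
  ∃ A : Ideal O, A.radical = IsLocalRing.maximalIdeal O ∧ ∀ a ∈ A, ∃ u ∈ G, (u : K) = 1 + (a : K)

/-- `O` is coarsely compatible with `G` if it is weakly compatible with `G` and no valuation
subring properly containing `O` has its unit group contained in `G`. -/
def CoarselyCompatible {K : Type*} [Field K] (O : ValuationSubring K) (G : Subgroup Kˣ) : Prop :=
  WeaklyCompatible O G ∧ ∀ O' : ValuationSubring K, O < O' → ¬ (O'.unitGroup ≤ G)

theorem coarselyCompatible_comparable
    {K : Type*} [Field K] (G : Subgroup Kˣ) (O₁ O₂ : ValuationSubring K)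
    (h₁ : CoarselyCompatible O₁ G) (h₂ : CoarselyCompatible O₂ G) :
    O₁ ≤ O₂ ∨ O₂ ≤ O₁ := by
  by_contra hcon
  push_neg at hcon
  obtain ⟨h12, h21⟩ := hcon
  set O₃ : ValuationSubring K := O₁.comp O₂ with hO₃
  have hle1 : O₁ ≤ O₃ := ValuationSubring.le_comp O₁ O₂
  have hle2 : O₂ ≤ O₃ := ValuationSubring.le_comp' h21
  have hlt : O₁ < O₃ := lt_of_le_not_ge hle1 (fun hc => h21 (le_trans hle2 hc))
  refine h₁.2 O₃ hlt ?_
  -- show O₃.unitGroup ≤ G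
  intro u hu
  rw [ValuationSubring.mem_unitGroup_iff] at hu
  have huO : (u : K) ∈ O₃ := O₃.mem_of_valuation_le_one _ hu.le
  have huO' : ((u : K))⁻¹ ∈ O₃ := O₃.mem_of_valuation_le_one _ (by rw [map_inv₀, hu, inv_one])
  have huO2 : ((u : K))⁻¹ ∈ O₂.comp O₁ := ValuationSubring.comp_le_comp h12 huO'
  obtain ⟨s₁, hs₁2, hs₁1, hs₁u⟩ := huO
  obtain ⟨t₂, ht₂1, ht₂2, ht₂u⟩ := huO2
  obtain ⟨s0, hs02, hs01⟩ := ValuationSubring.exists_unit_small h21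
  obtain ⟨t0, ht01, ht02⟩ := ValuationSubring.exists_unit_small h12
  obtain ⟨A₁, hA₁rad, hA₁G⟩ := h₁.1
  obtain ⟨A₂, hA₂rad, hA₂G⟩ := h₂.1
  set s : K := s0 * s₁ with hs
  set t : K := t0 * t₂ with ht
  have hsv1 : O₁.valuation s < 1 := by
    calc O₁.valuation s = O₁.valuation s0 * O₁.valuation s₁ := map_mul _ _ _
    _ ≤ O₁.valuation s0 * 1 := mul_le_mul_right hs₁1 _
    _ = O₁.valuation s0 := mul_one _
    _ < 1 := hs01
  have hsv2 : O₂.valuation s = 1 := by rw [map_mul, hs02, hs₁2, one_mul]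
  have htv2 : O₂.valuation t < 1 := by
    calc O₂.valuation t = O₂.valuation t0 * O₂.valuation t₂ := map_mul _ _ _
    _ ≤ O₂.valuation t0 * 1 := mul_le_mul_right ht₂2 _
    _ = O₂.valuation t0 := mul_one _
    _ < 1 := ht02
  have htv1 : O₁.valuation t = 1 := by rw [map_mul, ht01, ht₂1, one_mul]
  -- s, t are nonzero
  have hsne : s ≠ 0 := O₂.valuation.ne_zero_iff.mp (by rw [hsv2]; exact one_ne_zero)
  have htne : t ≠ 0 := O₁.valuation.ne_zero_iff.mp (by rw [htv1]; exact one_ne_zero)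
  -- w * s ∈ O₁ and w * u⁻¹ * t ∈ O₂ where w = u - 1
  have hws : O₁.valuation (((u : K) - 1) * s) ≤ 1 := by
    rw [show ((u : K) - 1) * s = s0 * ((u : K) * s₁) - s0 * s₁ by rw [hs]; ring]
    refine Valuation.map_sub_le _ ?_ ?_ <;> rw [map_mul]
    · exact mul_le_one' hs01.le hs₁u
    · exact mul_le_one' hs01.le hs₁1
  have hwt : O₂.valuation (((u : K) - 1) * ((u : K))⁻¹ * t) ≤ 1 := by
    rw [show ((u : K) - 1) * ((u : K))⁻¹ * t = t0 * t₂ - t0 * (((u : K))⁻¹ * t₂) by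
      rw [ht]; field_simp]
    refine Valuation.map_sub_le _ ?_ ?_ <;> rw [map_mul]
    · exact mul_le_one' ht02.le ht₂2
    · exact mul_le_one' ht02.le ht₂u
  -- powers of s and t in the ideals
  have hsO₁ : s ∈ O₁ := (O₁.valuation_le_one_iff s).mp hsv1.le
  have htO₂ : t ∈ O₂ := (O₂.valuation_le_one_iff t).mp htv2.le
  have hsA : (⟨s, hsO₁⟩ : O₁) ∈ A₁.radical := by
    rw [hA₁rad, ValuationSubring.valuation_lt_one_iff]
    exact hsv1
  have htA : (⟨t, htO₂⟩ : O₂) ∈ A₂.radical := by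
    rw [hA₂rad, ValuationSubring.valuation_lt_one_iff]
    exact htv2
  obtain ⟨k, hk⟩ := Ideal.mem_radical_iff.mp hsA
  obtain ⟨l, hl⟩ := Ideal.mem_radical_iff.mp htA
  -- the denominator D
  set D : K := s ^ (k + 1) + t ^ (l + 1) with hD
  have hsk1 : O₁.valuation (s ^ (k + 1)) < 1 := by
    rw [map_pow]
    exact pow_lt_one₀ zero_le' hsv1 (Nat.succ_ne_zero k)
  have htl2 : O₂.valuation (t ^ (l + 1)) < 1 := by
    rw [map_pow]
    exact pow_lt_one₀ zero_le' htv2 (Nat.succ_ne_zero l)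
  have ht1p : O₁.valuation (t ^ (l + 1)) = 1 := by rw [map_pow, htv1, one_pow]
  have hs2p : O₂.valuation (s ^ (k + 1)) = 1 := by rw [map_pow, hsv2, one_pow]
  have hD1 : O₁.valuation D = 1 := by
    rw [hD, Valuation.map_add_eq_of_lt_right _ (lt_of_lt_of_le hsk1 ht1p.ge), ht1p]
  have hD2 : O₂.valuation D = 1 := by
    rw [hD, Valuation.map_add_eq_of_lt_left _ (lt_of_lt_of_le htl2 hs2p.ge), hs2p]
  have hDne : D ≠ 0 := O₁.valuation.ne_zero_iff.mp (by rw [hD1]; exact one_ne_zero)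
  -- the two elements of the ideals
  set ρ : K := ((u : K) - 1) * s * D⁻¹ with hρ
  set σ : K := -(((u : K) - 1) * ((u : K))⁻¹ * t * D⁻¹) with hσ
  have hρO : ρ ∈ O₁ := by
    rw [← O₁.valuation_le_one_iff, hρ, map_mul, map_inv₀, hD1, inv_one, mul_one]
    exact hws
  have hσO : σ ∈ O₂ := by
    rw [← O₂.valuation_le_one_iff, hσ, Valuation.map_neg, map_mul, map_inv₀, hD2, inv_one,
      mul_one]
    exact hwt
  have hP₁ : (⟨s, hsO₁⟩ : O₁) ^ k * ⟨ρ, hρO⟩ ∈ A₁ := A₁.mul_mem_right _ hk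
  have hP₂ : (⟨t, htO₂⟩ : O₂) ^ l * ⟨σ, hσO⟩ ∈ A₂ := A₂.mul_mem_right _ hl
  obtain ⟨g₁, hg₁G, hg₁⟩ := hA₁G _ hP₁
  obtain ⟨g₂, hg₂G, hg₂⟩ := hA₂G _ hP₂
  have hg₁' : (g₁ : K) = 1 + s ^ k * ρ := by
    rw [hg₁]; push_cast; ring
  have hg₂' : (g₂ : K) = 1 + t ^ l * σ := by
    rw [hg₂]; push_cast; ring
  have hune : (u : K) ≠ 0 := u.ne_zero
  have key : (g₂ : K) * (u : K) = (g₁ : K) := by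
    rw [hg₁', hg₂', hρ, hσ]
    have hDid : s ^ (k + 1) + t ^ (l + 1) = D := hD.symm
    field_simp
    ring
  have hgu : g₁ * g₂⁻¹ = u := by
    apply Units.ext
    push_cast
    rw [← key]
    field_simp
  rw [← hgu]
  exact mul_mem hg₁G (inv_mem hg₂G)
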